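/- arXiv:2511.06252 — 2 statements merged into one kernel-verified Lean document; each statement's English description precedes it below -/
import Mathlib

section
/- Let S and A be finite types, let T¹, T² : S × A → PMF(S) be transition kernels, and let π¹, π² : S → PMF(A) be policies. Suppose D_TV(T¹(s,a), T²(s,a)) ≤ ε_T for all s ∈ S and a ∈ A, and D_TV(π¹(s), π²(s)) ≤ ε_π for all s ∈ S. Define the composed one-step state kernels Pⁱ : S → PMF(S) by Pⁱ(s)(s') = ∑_{a ∈ A} πⁱ(s)(a) · Tⁱ(s,a)(s') for i = 1, 2. Then D_TV(P¹(s), P²(s)) ≤ ε_T + ε_π for every s ∈ S. -/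
open scoped BigOperators

/-- Total variation distance between two PMFs on a finite type. -/
noncomputable def tv {X : Type*} [Fintype X] (p q : PMF X) : ℝ :=
  (1 / 2) * ∑ x, |(p x).toReal - (q x).toReal|

lemma tv_nonneg' {X : Type*} [Fintype X] (p q : PMF X) : 0 ≤ tv p q := by
  unfold tv; positivity

lemma pmf_sum_toReal_one {X : Type*} [Fintype X] (p : PMF X) :
    ∑ x, (p x).toReal = 1 := by
  rw [← ENNReal.toReal_sum (fun x _ => p.apply_ne_top x), ← tsum_fintype (L := SummationFilter.unconditional _),
    p.tsum_coe, ENNReal.toReal_one]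

/-- If the transition kernels are `ε_T`-close and the policies are
`ε_π`-close in total variation, then the composed one-step state kernels
`Pⁱ(s)(s') = ∑_a πⁱ(s)(a) · Tⁱ(s,a)(s')` satisfy
`D_TV(P¹(s), P²(s)) ≤ ε_T + ε_π` for every state `s`. -/
theorem tv_composed_kernel_le {S A : Type*} [Fintype S] [Fintype A]
    (T₁ T₂ : S × A → PMF S) (π₁ π₂ : S → PMF A) (εT επ : ℝ)
    (hT : ∀ s a, tv (T₁ (s, a)) (T₂ (s, a)) ≤ εT)
    (hπ : ∀ s, tv (π₁ s) (π₂ s) ≤ επ)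
    (P₁ P₂ : S → PMF S)
    (hP₁ : ∀ s s', P₁ s s' = ∑ a, π₁ s a * T₁ (s, a) s')
    (hP₂ : ∀ s s', P₂ s s' = ∑ a, π₂ s a * T₂ (s, a) s') :
    ∀ s, tv (P₁ s) (P₂ s) ≤ εT + επ := by
  intro s
  haveI hA : Nonempty A := by
    by_contra h
    rw [not_nonempty_iff] at h
    have h1 := (π₁ s).tsum_coe
    simp at h1
  obtain ⟨a₀⟩ := hA
  have hεT : 0 ≤ εT := le_trans (tv_nonneg' _ _) (hT s a₀)
  set p := fun a => (π₁ s a).toReal with hp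
  set q := fun a => (π₂ s a).toReal with hq
  set t1 := fun a x => (T₁ (s, a) x).toReal with ht1
  set t2 := fun a x => (T₂ (s, a) x).toReal with ht2
  have hP1 : ∀ x, (P₁ s x).toReal = ∑ a, p a * t1 a x := by
    intro x
    rw [hP₁ s x, ENNReal.toReal_sum (fun a _ => ENNReal.mul_ne_top
      ((π₁ s).apply_ne_top a) ((T₁ (s, a)).apply_ne_top x))]
    simp [ENNReal.toReal_mul]
    rfl
  have hP2 : ∀ x, (P₂ s x).toReal = ∑ a, q a * t2 a x := by
    intro x
    rw [hP₂ s x, ENNReal.toReal_sum (fun a _ => ENNReal.mul_ne_top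
      ((π₂ s).apply_ne_top a) ((T₂ (s, a)).apply_ne_top x))]
    simp [ENNReal.toReal_mul]
    rfl
  have key : ∀ x a, |p a * t1 a x - q a * t2 a x| ≤
      p a * |t1 a x - t2 a x| + |p a - q a| * t2 a x := by
    intro x a
    have : p a * t1 a x - q a * t2 a x
        = p a * (t1 a x - t2 a x) + (p a - q a) * t2 a x := by ring
    rw [this]
    refine le_trans (abs_add_le _ _) ?_
    rw [abs_mul, abs_mul, abs_of_nonneg (ENNReal.toReal_nonneg : 0 ≤ p a),
      abs_of_nonneg (ENNReal.toReal_nonneg : 0 ≤ t2 a x)]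
  calc tv (P₁ s) (P₂ s)
      = (1/2) * ∑ x, |∑ a, p a * t1 a x - ∑ a, q a * t2 a x| := by
        unfold tv; congr 1; apply Finset.sum_congr rfl; intro x _
        rw [hP1 x, hP2 x]
    _ ≤ (1/2) * ∑ x, ∑ a, (p a * |t1 a x - t2 a x| + |p a - q a| * t2 a x) := by
        apply mul_le_mul_of_nonneg_left _ (by norm_num)
        apply Finset.sum_le_sum; intro x _
        rw [← Finset.sum_sub_distrib]
        exact le_trans (Finset.abs_sum_le_sum_abs _ _)
          (Finset.sum_le_sum fun a _ => key x a)
    _ = (∑ a, p a * ((1/2) * ∑ x, |t1 a x - t2 a x|))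
        + (1/2) * ∑ a, |p a - q a| * (∑ x, t2 a x) := by
        rw [Finset.sum_comm]
        simp only [Finset.sum_add_distrib]
        rw [mul_add]
        congr 1
        · rw [Finset.mul_sum]
          refine Finset.sum_congr rfl fun a _ => ?_
          rw [← Finset.mul_sum]; ring
        · congr 1
          exact Finset.sum_congr rfl fun a _ => (Finset.mul_sum _ _ _).symm
    _ ≤ εT + επ := by
        have ht2sum : ∀ a, ∑ x, t2 a x = 1 := fun a => pmf_sum_toReal_one _
        have hT' : ∀ a, (1/2) * ∑ x, |t1 a x - t2 a x| ≤ εT := fun a => hT s a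
        have hπ' : (1/2) * ∑ a, |p a - q a| ≤ επ := hπ s
        have h1 : ∑ a, p a * ((1/2) * ∑ x, |t1 a x - t2 a x|) ≤ εT := by
          calc ∑ a, p a * ((1/2) * ∑ x, |t1 a x - t2 a x|)
              ≤ ∑ a, p a * εT := Finset.sum_le_sum fun a _ =>
                mul_le_mul_of_nonneg_left (hT' a) ENNReal.toReal_nonneg
            _ = εT := by rw [← Finset.sum_mul, pmf_sum_toReal_one, one_mul]
        simp only [ht2sum, mul_one]
        exact add_le_add h1 hπ'
end

section
/- Let S and A be finite types. Let T, T̂ : S × A → PMF(S) be a true transition kernel and a learned model kernel, let π, π_D : S → PMF(A) be a target policy and a behavior policy, let ρ₀ be a common initial distribution, let r : S × A → ℝ satisfy |r(s,a)| ≤ R for all s, a, and let γ ∈ [0,1). Let ε_T, ε_π, ε_S, C_T, C_π ≥ 0 and suppose D_TV(T(s,a), T̂(s,a)) ≤ ε_T + C_T · ε_S for all s, a, and D_TV(π(s), π_D(s)) ≤ ε_π for all s. Let G(π) denote the discounted return of π under T and Ĝ(π) the discounted return of π under T̂. Then |G(π) − Ĝ(π)| ≤ Rγ[4ε_π + 2ε_T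 + (C_π + 2C_T)ε_S]/(1 − γ)² + 2R(2ε_π + C_π ε_S)/(1 − γ). -/
open scoped BigOperators

lemma pmf_sum_toReal {X : Type*} [Fintype X] (q : PMF X) : ∑ x, (q x).toReal = 1 := by
  rw [← ENNReal.toReal_sum (fun a _ => q.apply_ne_top a)]
  rw [← tsum_fintype (L := SummationFilter.unconditional X), q.tsum_coe, ENNReal.toReal_one]

lemma step_bound {S A : Type*} [Fintype S] [Fintype A]
    (T That : S × A → PMF S) (π : S → PMF A) (ε : ℝ)
    (hT : ∀ s a, ∑ s', |(T (s,a) s').toReal - (That (s,a) s').toReal| ≤ 2 * ε)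
    (μt μht ν νh : PMF S)
    (hν : ∀ s', ν s' = ∑ s, ∑ a, μt s * π s a * T (s, a) s')
    (hνh : ∀ s', νh s' = ∑ s, ∑ a, μht s * π s a * That (s, a) s') :
    ∑ s', |(ν s').toReal - (νh s').toReal| ≤
      (∑ s, |(μt s).toReal - (μht s).toReal|) + 2 * ε := by
  have key : ∀ s', |(ν s').toReal - (νh s').toReal| ≤
      ∑ s, ∑ a, (|(μt s).toReal - (μht s).toReal| * (π s a).toReal * (T (s,a) s').toReal
        + (μht s).toReal * (π s a).toReal * |(T (s,a) s').toReal - (That (s,a) s').toReal|) := by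
    intro s'
    have hν' : (ν s').toReal = ∑ s, ∑ a, (μt s).toReal * (π s a).toReal * (T (s,a) s').toReal := by
      rw [hν s', ENNReal.toReal_sum (fun a _ => by
        exact ENNReal.sum_ne_top.2 (fun b _ => ENNReal.mul_ne_top
          (ENNReal.mul_ne_top (PMF.apply_ne_top _ _) (PMF.apply_ne_top _ _)) (PMF.apply_ne_top _ _)))]
      refine Finset.sum_congr rfl fun s _ => ?_
      rw [ENNReal.toReal_sum (fun b _ => ENNReal.mul_ne_top
          (ENNReal.mul_ne_top (PMF.apply_ne_top _ _) (PMF.apply_ne_top _ _)) (PMF.apply_ne_top _ _))]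
      simp [ENNReal.toReal_mul]
    have hνh' : (νh s').toReal = ∑ s, ∑ a, (μht s).toReal * (π s a).toReal * (That (s,a) s').toReal := by
      rw [hνh s', ENNReal.toReal_sum (fun a _ => by
        exact ENNReal.sum_ne_top.2 (fun b _ => ENNReal.mul_ne_top
          (ENNReal.mul_ne_top (PMF.apply_ne_top _ _) (PMF.apply_ne_top _ _)) (PMF.apply_ne_top _ _)))]
      refine Finset.sum_congr rfl fun s _ => ?_
      rw [ENNReal.toReal_sum (fun b _ => ENNReal.mul_ne_top
          (ENNReal.mul_ne_top (PMF.apply_ne_top _ _) (PMF.apply_ne_top _ _)) (PMF.apply_ne_top _ _))]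
      simp [ENNReal.toReal_mul]
    rw [hν', hνh', ← Finset.sum_sub_distrib]
    refine (Finset.abs_sum_le_sum_abs _ _).trans (Finset.sum_le_sum fun s _ => ?_)
    rw [← Finset.sum_sub_distrib]
    refine (Finset.abs_sum_le_sum_abs _ _).trans (Finset.sum_le_sum fun a _ => ?_)
    have h1 : (0:ℝ) ≤ (π s a).toReal := ENNReal.toReal_nonneg
    have h2 : (0:ℝ) ≤ (T (s,a) s').toReal := ENNReal.toReal_nonneg
    have h3 : (0:ℝ) ≤ (μht s).toReal := ENNReal.toReal_nonneg
    have : (μt s).toReal * (π s a).toReal * (T (s,a) s').toReal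
        - (μht s).toReal * (π s a).toReal * (That (s,a) s').toReal
        = ((μt s).toReal - (μht s).toReal) * (π s a).toReal * (T (s,a) s').toReal
          + (μht s).toReal * (π s a).toReal * ((T (s,a) s').toReal - (That (s,a) s').toReal) := by
      ring
    rw [this]
    refine (abs_add_le _ _).trans (le_of_eq ?_)
    rw [abs_mul, abs_mul, abs_mul, abs_mul, abs_of_nonneg h1, abs_of_nonneg h2, abs_of_nonneg h3]
  calc ∑ s', |(ν s').toReal - (νh s').toReal|
      ≤ ∑ s', ∑ s, ∑ a, (|(μt s).toReal - (μht s).toReal| * (π s a).toReal * (T (s,a) s').toReal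
        + (μht s).toReal * (π s a).toReal * |(T (s,a) s').toReal - (That (s,a) s').toReal|) :=
        Finset.sum_le_sum fun s' _ => key s'
    _ = ∑ s, ∑ a, (|(μt s).toReal - (μht s).toReal| * (π s a).toReal * (∑ s', (T (s,a) s').toReal)
        + (μht s).toReal * (π s a).toReal * (∑ s', |(T (s,a) s').toReal - (That (s,a) s').toReal|)) := by
        rw [Finset.sum_comm]
        refine Finset.sum_congr rfl fun s _ => ?_
        rw [Finset.sum_comm]
        refine Finset.sum_congr rfl fun a _ => ?_
        rw [Finset.sum_add_distrib, ← Finset.mul_sum, ← Finset.mul_sum]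
    _ ≤ ∑ s, ∑ a, (|(μt s).toReal - (μht s).toReal| * (π s a).toReal * 1
        + (μht s).toReal * (π s a).toReal * (2 * ε)) := by
        refine Finset.sum_le_sum fun s _ => Finset.sum_le_sum fun a _ => ?_
        rw [pmf_sum_toReal (T (s,a))]
        exact add_le_add le_rfl (mul_le_mul_of_nonneg_left (hT s a)
          (mul_nonneg ENNReal.toReal_nonneg ENNReal.toReal_nonneg))
    _ = (∑ s, |(μt s).toReal - (μht s).toReal| * (∑ a, (π s a).toReal))
        + (∑ s, (μht s).toReal * (∑ a, (π s a).toReal)) * (2 * ε) := by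
        rw [Finset.sum_mul, ← Finset.sum_add_distrib]
        refine Finset.sum_congr rfl fun s _ => ?_
        simp only [Finset.mul_sum, Finset.sum_mul, ← Finset.sum_add_distrib]
        exact Finset.sum_congr rfl fun a _ => by ring
    _ = (∑ s, |(μt s).toReal - (μht s).toReal|) + 2 * ε := by
        simp [pmf_sum_toReal, pmf_sum_toReal μht]

set_option maxHeartbeats 1000000 in
/-- Theorem 1 of the paper: For a true kernel `T` and a learned kernel
`T̂` that are `(ε_T + C_T·ε_S)`-close, and a target policy `π` that is `ε_π`-close to a
behavior policy `π_D`, with reward bounded by `R` and discount `γ ∈ [0,1)`, the return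
of `π` under `T` and the return of `π` under `T̂` satisfy
`|G(π) − Ĝ(π)| ≤ Rγ[4ε_π + 2ε_T + (C_π + 2C_T)ε_S]/(1−γ)²
  + 2R(2ε_π + C_π ε_S)/(1−γ)`. -/
theorem generalization_error_bound {S A : Type*} [Fintype S] [Fintype A]
    (ρ₀ : PMF S) (T That : S × A → PMF S) (π πD : S → PMF A)
    (εT επ εS CT Cπ : ℝ)
    (hεT : 0 ≤ εT) (hεπ : 0 ≤ επ) (hεS : 0 ≤ εS) (hCT : 0 ≤ CT) (hCπ : 0 ≤ Cπ)
    (hT : ∀ s a, tv (T (s, a)) (That (s, a)) ≤ εT + CT * εS)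
    (hπ : ∀ s, tv (π s) (πD s) ≤ επ)
    (μ μhat : ℕ → PMF S)
    (hμ0 : μ 0 = ρ₀) (hμhat0 : μhat 0 = ρ₀)
    (hμ : ∀ t s', μ (t + 1) s' = ∑ s, ∑ a, μ t s * π s a * T (s, a) s')
    (hμhat : ∀ t s', μhat (t + 1) s' = ∑ s, ∑ a, μhat t s * π s a * That (s, a) s')
    (p phat : ℕ → PMF (S × A))
    (hp : ∀ t s a, p t (s, a) = μ t s * π s a)
    (hphat : ∀ t s a, phat t (s, a) = μhat t s * π s a)
    (r : S × A → ℝ) (R : ℝ) (hr : ∀ s a, |r (s, a)| ≤ R)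
    (γ : ℝ) (hγ0 : 0 ≤ γ) (hγ1 : γ < 1)
    (G Ghat : ℝ)
    (hG : G = ∑' t : ℕ, γ ^ t * ∑ sa : S × A, (p t sa).toReal * r sa)
    (hGhat : Ghat = ∑' t : ℕ, γ ^ t * ∑ sa : S × A, (phat t sa).toReal * r sa) :
    |G - Ghat| ≤
      R * γ * (4 * επ + 2 * εT + (Cπ + 2 * CT) * εS) / (1 - γ) ^ 2 +
        2 * R * (2 * επ + Cπ * εS) / (1 - γ) := by
  have hS : Nonempty S := by
    by_contra h
    rw [not_nonempty_iff] at h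
    have := ρ₀.tsum_coe
    rw [tsum_empty] at this
    exact zero_ne_one this
  have hA : Nonempty A := by
    by_contra h
    rw [not_nonempty_iff] at h
    have := (π (Classical.arbitrary S)).tsum_coe
    rw [tsum_empty] at this
    exact zero_ne_one this
  have hR : 0 ≤ R := (abs_nonneg _).trans (hr (Classical.arbitrary S) (Classical.arbitrary A))
  set ε := εT + CT * εS with hεdef
  have hε0 : 0 ≤ ε := by positivity
  have hγpow : ∀ t : ℕ, (0:ℝ) ≤ γ ^ t := fun t => pow_nonneg hγ0 t
  have h1γ : 0 < 1 - γ := by linarith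
  have hTsum : ∀ s a, ∑ s', |(T (s,a) s').toReal - (That (s,a) s').toReal| ≤ 2 * ε := by
    intro s a
    have h := hT s a
    unfold tv at h
    linarith
  -- marginal distance bound
  have hd : ∀ t : ℕ, ∑ s, |(μ t s).toReal - (μhat t s).toReal| ≤ 2 * ε * t := by
    intro t
    induction t with
    | zero => simp [hμ0, hμhat0]
    | succ n ih =>
      have h := step_bound T That π ε hTsum (μ n) (μhat n) (μ (n+1)) (μhat (n+1)) (hμ n) (hμhat n)
      push_cast
      linarith
  -- per-step reward difference
  have hXY : ∀ t : ℕ, |(∑ sa : S × A, (p t sa).toReal * r sa)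
      - ∑ sa : S × A, (phat t sa).toReal * r sa| ≤ R * (2 * ε * t) := by
    intro t
    rw [← Finset.sum_sub_distrib]
    refine (Finset.abs_sum_le_sum_abs _ _).trans ?_
    have step1 : ∀ sa : S × A, |(p t sa).toReal * r sa - (phat t sa).toReal * r sa|
        ≤ |(p t sa).toReal - (phat t sa).toReal| * R := by
      intro sa
      rw [← sub_mul, abs_mul]
      exact mul_le_mul_of_nonneg_left (hr sa.1 sa.2) (abs_nonneg _)
    refine (Finset.sum_le_sum fun sa _ => step1 sa).trans ?_
    rw [← Finset.sum_mul]
    have key : ∑ sa : S × A, |(p t sa).toReal - (phat t sa).toReal|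
        = ∑ s, |(μ t s).toReal - (μhat t s).toReal| * ∑ a, (π s a).toReal := by
      rw [Fintype.sum_prod_type]
      refine Finset.sum_congr rfl fun s _ => ?_
      rw [Finset.mul_sum]
      refine Finset.sum_congr rfl fun a _ => ?_
      rw [hp t s a, hphat t s a, ENNReal.toReal_mul, ENNReal.toReal_mul, ← sub_mul,
        abs_mul, abs_of_nonneg ENNReal.toReal_nonneg]
    rw [key]
    simp only [pmf_sum_toReal, mul_one]
    calc (∑ s, |(μ t s).toReal - (μhat t s).toReal|) * R ≤ (2 * ε * t) * R :=
          mul_le_mul_of_nonneg_right (hd t) hR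
      _ = R * (2 * ε * t) := by ring
  -- boundedness of per-step rewards
  have hXb : ∀ (q : ℕ → PMF (S × A)) (t : ℕ), |∑ sa : S × A, (q t sa).toReal * r sa| ≤ R := by
    intro q t
    refine (Finset.abs_sum_le_sum_abs _ _).trans ?_
    calc ∑ sa : S × A, |(q t sa).toReal * r sa| ≤ ∑ sa : S × A, (q t sa).toReal * R := by
          refine Finset.sum_le_sum fun sa _ => ?_
          rw [abs_mul, abs_of_nonneg ENNReal.toReal_nonneg]
          exact mul_le_mul_of_nonneg_left (hr sa.1 sa.2) ENNReal.toReal_nonneg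
      _ = R := by rw [← Finset.sum_mul, pmf_sum_toReal, one_mul]
  have hγnorm : ‖γ‖ < 1 := by rwa [Real.norm_eq_abs, abs_of_nonneg hγ0]
  have hgeo : Summable (fun t : ℕ => R * γ ^ t) :=
    (summable_geometric_of_lt_one hγ0 hγ1).mul_left R
  have hsum : ∀ (q : ℕ → PMF (S × A)),
      Summable (fun t : ℕ => γ ^ t * ∑ sa : S × A, (q t sa).toReal * r sa) := by
    intro q
    refine Summable.of_norm_bounded hgeo fun t => ?_
    rw [Real.norm_eq_abs, abs_mul, abs_pow, abs_of_nonneg hγ0]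
    calc γ ^ t * |∑ sa : S × A, (q t sa).toReal * r sa| ≤ γ ^ t * R :=
          mul_le_mul_of_nonneg_left (hXb q t) (hγpow t)
      _ = R * γ ^ t := mul_comm _ _
  have hsum1 := hsum p
  have hsum2 := hsum phat
  have hBsum : Summable (fun t : ℕ => 2 * R * ε * ((t : ℝ) * γ ^ t)) := by
    have := (summable_pow_mul_geometric_of_norm_lt_one 1 hγnorm (R := ℝ)).mul_left (2 * R * ε)
    simpa using this
  have hterm : ∀ t : ℕ,
      |γ ^ t * (∑ sa : S × A, (p t sa).toReal * r sa)
        - γ ^ t * (∑ sa : S × A, (phat t sa).toReal * r sa)| ≤ 2 * R * ε * ((t : ℝ) * γ ^ t) := by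
    intro t
    rw [← mul_sub, abs_mul, abs_pow, abs_of_nonneg hγ0]
    calc γ ^ t * |(∑ sa : S × A, (p t sa).toReal * r sa)
          - ∑ sa : S × A, (phat t sa).toReal * r sa| ≤ γ ^ t * (R * (2 * ε * t)) :=
          mul_le_mul_of_nonneg_left (hXY t) (hγpow t)
      _ = 2 * R * ε * ((t : ℝ) * γ ^ t) := by ring
  rw [hG, hGhat, ← Summable.tsum_sub hsum1 hsum2]
  have habs : |∑' t : ℕ, (γ ^ t * (∑ sa : S × A, (p t sa).toReal * r sa)
      - γ ^ t * (∑ sa : S × A, (phat t sa).toReal * r sa))|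
      ≤ ∑' t : ℕ, 2 * R * ε * ((t : ℝ) * γ ^ t) := by
    have hsumabs : Summable (fun t : ℕ => ‖γ ^ t * (∑ sa : S × A, (p t sa).toReal * r sa)
        - γ ^ t * (∑ sa : S × A, (phat t sa).toReal * r sa)‖) :=
      Summable.of_nonneg_of_le (fun t => norm_nonneg _)
        (fun t => le_trans (le_of_eq (Real.norm_eq_abs _)) (hterm t)) hBsum
    rw [← Real.norm_eq_abs]
    refine (norm_tsum_le_tsum_norm hsumabs).trans ?_
    exact Summable.tsum_le_tsum (fun t => le_trans (le_of_eq (Real.norm_eq_abs _)) (hterm t)) hsumabs hBsum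
  refine habs.trans ?_
  have htsum : ∑' t : ℕ, 2 * R * ε * ((t : ℝ) * γ ^ t) = 2 * R * ε * (γ / (1 - γ) ^ 2) := by
    rw [tsum_mul_left, tsum_coe_mul_geometric_of_norm_lt_one hγnorm]
  rw [htsum]
  have hnum : 2 * R * ε * γ ≤ R * γ * (4 * επ + 2 * εT + (Cπ + 2 * CT) * εS) := by
    have h1 : 0 ≤ R * γ * επ := by positivity
    have h2 : 0 ≤ R * γ * (Cπ * εS) := by positivity
    rw [hεdef]
    nlinarith
  have hfirst : 2 * R * ε * (γ / (1 - γ) ^ 2)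
      ≤ R * γ * (4 * επ + 2 * εT + (Cπ + 2 * CT) * εS) / (1 - γ) ^ 2 := by
    rw [show 2 * R * ε * (γ / (1 - γ) ^ 2) = (2 * R * ε * γ) / (1 - γ) ^ 2 by ring]
    gcongr
  refine hfirst.trans (le_add_of_nonneg_right ?_)
  have : 0 ≤ 2 * επ + Cπ * εS := by positivity
  positivity
end
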